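/- (Exponential form of the Todd power series.) In the ring ℚ⟦X⟧ of formal power series over ℚ, the following identity holds: Σ_{n≥0} (−1)^n (B_n/n!) X^n = exp( − Σ_{k≥1} (B_k/(k · k!)) X^k ), where B_n denotes the n-th Bernoulli number with the convention B_1 = −1/2, and exp on the right-hand side is the formal power series exponential of a series with zero constant term. Equivalently, the power series P(X) characterized by P(X) · (1 − exp(−X)) = X (i.e., P(X) = X/(1 − e^{−X}) = Σ_{n≥0} (−1)^n B_n X^n/n!) satisfies P(X) = exp( − Σ_{k≥1} B_k X^k/(k · k!) ). -/

import Mathlib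

/-- The formal exponential `exp(g) = Σ_{m ≥ 0} g^m / m!` of a formal power series `g` over
`ℚ` (intended for `g` with zero constant term, in which case the coefficient of `X^n` only
receives contributions from the finitely many terms with `m ≤ n`, as encoded here). -/
noncomputable def formalExp (g : PowerSeries ℚ) : PowerSeries ℚ :=
  PowerSeries.mk fun n =>
    ∑ m ∈ Finset.range (n + 1), PowerSeries.coeff n (g ^ m) / (m.factorial : ℚ)

/-- The Todd power series `P(X) = X/(1 - e^{-X}) = Σ_{n ≥ 0} (-1)^n B_n X^n / n!`,
where `B_n` is the `n`-th Bernoulli number (convention `B_1 = -1/2`). -/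
noncomputable def toddSeries : PowerSeries ℚ :=
  PowerSeries.mk fun n => (-1) ^ n * bernoulli n / (n.factorial : ℚ)

open PowerSeries

namespace ToddAux

/-- Uniqueness of solutions to the ODE `P' = h·P` with given constant coefficient. -/
theorem ode_unique (h P Q : PowerSeries ℚ) (hP : d⁄dX ℚ P = h * P) (hQ : d⁄dX ℚ Q = h * Q)
    (h0 : constantCoeff P = constantCoeff Q) : P = Q := by
  ext n
  induction n using Nat.strong_induction_on with
  | _ n ih =>
    match n with
    | 0 => simpa [coeff_zero_eq_constantCoeff] using h0
    | n + 1 =>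
      have h1 : coeff n (d⁄dX ℚ P) = coeff n (d⁄dX ℚ Q) := by
        rw [hP, hQ, coeff_mul, coeff_mul]
        refine Finset.sum_congr rfl fun p hp => ?_
        rw [Finset.HasAntidiagonal.mem_antidiagonal] at hp
        rw [ih p.2 (by omega)]
      rw [coeff_derivative, coeff_derivative] at h1
      have hn : ((n : ℚ) + 1) ≠ 0 := by positivity
      exact mul_right_cancel₀ hn h1

theorem coeff_pow_eq_zero {g : PowerSeries ℚ} (hg : constantCoeff g = 0) {k m : ℕ}
    (h : k < m) : coeff k (g ^ m) = 0 := by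
  obtain ⟨f, hf⟩ := X_dvd_iff.mpr hg
  have : g ^ m = X ^ m * f ^ m := by rw [hf, mul_pow]
  rw [this, coeff_X_pow_mul', if_neg (by omega)]

/-- Truncated exponential sum. -/
noncomputable def F (g : PowerSeries ℚ) (N : ℕ) : PowerSeries ℚ :=
  ∑ m ∈ Finset.range N, C (1 / (m.factorial : ℚ)) * g ^ m

theorem coeff_F (g : PowerSeries ℚ) (k N : ℕ) :
    coeff k (F g N) = ∑ m ∈ Finset.range N, coeff k (g ^ m) / (m.factorial : ℚ) := by
  rw [F, map_sum]
  exact Finset.sum_congr rfl fun m _ => by rw [coeff_C_mul, one_div_mul_eq_div]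

theorem coeff_formalExp (g : PowerSeries ℚ) (hg : constantCoeff g = 0) {k N : ℕ}
    (h : k < N) : coeff k (formalExp g) = coeff k (F g N) := by
  rw [formalExp, coeff_mk, coeff_F]
  refine Finset.sum_subset (Finset.range_subset_range.mpr h) fun m hm hmk => ?_
  rw [coeff_pow_eq_zero hg (by simpa using hmk), zero_div]

theorem derivative_F (g : PowerSeries ℚ) (N : ℕ) :
    d⁄dX ℚ (F g (N + 1)) = d⁄dX ℚ g * F g N := by
  rw [F, F, map_sum, Finset.sum_range_succ', Finset.mul_sum]
  have h0 : d⁄dX ℚ (C (1 / ((Nat.factorial 0 : ℕ) : ℚ)) * g ^ 0) = 0 := by simp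
  rw [h0, add_zero]
  refine Finset.sum_congr rfl fun m _ => ?_
  rw [Derivation.leibniz, Derivation.leibniz_pow, derivative_C, smul_zero, add_zero,
    smul_eq_mul, smul_eq_mul, nsmul_eq_mul]
  have hc : ((m + 1 : ℕ) : PowerSeries ℚ) = C ((m + 1 : ℕ) : ℚ) := (map_natCast (C (R := ℚ)) _).symm
  rw [Nat.add_sub_cancel, hc, show C (1 / ((Nat.factorial (m+1) : ℕ) : ℚ)) *
      (C ((m + 1 : ℕ) : ℚ) * (g ^ m * d⁄dX ℚ g))
      = C (1 / ((Nat.factorial (m+1) : ℕ) : ℚ) * ((m + 1 : ℕ) : ℚ)) * (g ^ m * d⁄dX ℚ g) by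
        rw [map_mul]; ring]
  have : (1 / ((Nat.factorial (m+1) : ℕ) : ℚ)) * ((m + 1 : ℕ) : ℚ)
      = 1 / ((Nat.factorial m : ℕ) : ℚ) := by
    have h1 : ((Nat.factorial m : ℕ) : ℚ) ≠ 0 := Nat.cast_ne_zero.mpr (Nat.factorial_ne_zero m)
    have h2 : ((m : ℚ) + 1) ≠ 0 := by positivity
    rw [Nat.factorial_succ]
    push_cast
    field_simp
  rw [this]
  ring

theorem constantCoeff_formalExp (g : PowerSeries ℚ) : constantCoeff (formalExp g) = 1 := by
  simp [formalExp, constantCoeff_mk]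

theorem derivative_formalExp (g : PowerSeries ℚ) (hg : constantCoeff g = 0) :
    d⁄dX ℚ (formalExp g) = d⁄dX ℚ g * formalExp g := by
  ext n
  have h1 : coeff n (d⁄dX ℚ (formalExp g)) = coeff n (d⁄dX ℚ (F g (n + 2))) := by
    rw [coeff_derivative, coeff_derivative, coeff_formalExp g hg (show n + 1 < n + 2 by omega)]
  rw [h1, derivative_F, coeff_mul, coeff_mul]
  refine Finset.sum_congr rfl fun p hp => ?_
  rw [Finset.HasAntidiagonal.mem_antidiagonal] at hp
  rw [coeff_formalExp g hg (show p.2 < n + 1 by omega)]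

/-- The series `-Σ_{k≥1} B_k X^k /(k k!)`. -/
noncomputable def G : PowerSeries ℚ :=
  - PowerSeries.mk fun k =>
      if k = 0 then (0 : ℚ) else bernoulli k / ((k : ℚ) * (k.factorial : ℚ))

theorem constantCoeff_G : constantCoeff G = 0 := by
  simp [G, constantCoeff_mk]

theorem X_mul_derivative_G : X * d⁄dX ℚ G = 1 - bernoulliPowerSeries ℚ := by
  ext n
  match n with
  | 0 => simp [bernoulliPowerSeries, coeff_zero_eq_constantCoeff]
  | n + 1 =>
    rw [coeff_succ_X_mul, coeff_derivative, map_sub, bernoulliPowerSeries, coeff_mk]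
    have hone : coeff (n + 1) (1 : PowerSeries ℚ) = 0 := by
      rw [coeff_one, if_neg (by omega)]
    rw [hone]
    have : coeff (n + 1) G = -(bernoulli (n + 1) / (((n + 1 : ℕ) : ℚ) * ((n+1).factorial : ℚ))) := by
      simp [G, coeff_mk]
    rw [this]
    have h2 : (((n + 1 : ℕ)).factorial : ℚ) ≠ 0 := Nat.cast_ne_zero.mpr (Nat.factorial_ne_zero _)
    have h3 : ((n : ℚ) + 1) ≠ 0 := by positivity
    have halg : (algebraMap ℚ ℚ) (bernoulli (n+1) / ((n+1).factorial : ℚ))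
        = bernoulli (n+1) / ((n+1).factorial : ℚ) := by
      simp
    rw [halg]
    push_cast
    field_simp
    ring

theorem todd_eq_rescale : toddSeries = rescale (-1 : ℚ) (bernoulliPowerSeries ℚ) := by
  ext n
  rw [toddSeries, coeff_mk, coeff_rescale, bernoulliPowerSeries, coeff_mk]
  have : (algebraMap ℚ ℚ) (bernoulli n / (n.factorial : ℚ)) = bernoulli n / (n.factorial : ℚ) := by
    simp
  rw [this]
  ring

theorem todd_mul : toddSeries * (1 - rescale (-1 : ℚ) (exp ℚ)) = X := by
  rw [todd_eq_rescale]
  have h := congrArg (rescale (-1 : ℚ)) (bernoulliPowerSeries_mul_exp_sub_one ℚ)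
  rw [map_mul, map_sub, map_one, rescale_neg_one_X] at h
  linear_combination -h

theorem constantCoeff_todd : constantCoeff toddSeries = 1 := by
  simp [toddSeries, constantCoeff_mk]

theorem derivative_rescale_exp :
    d⁄dX ℚ (rescale (-1 : ℚ) (exp ℚ)) = - rescale (-1 : ℚ) (exp ℚ) := by
  ext n
  rw [coeff_derivative, coeff_rescale, coeff_exp, map_neg, coeff_rescale, coeff_exp]
  have h1 : ((n.factorial : ℕ) : ℚ) ≠ 0 := Nat.cast_ne_zero.mpr (Nat.factorial_ne_zero _)
  have h2 : (((n+1).factorial : ℕ) : ℚ) ≠ 0 := Nat.cast_ne_zero.mpr (Nat.factorial_ne_zero _)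
  have h3 : ((n : ℚ) + 1) ≠ 0 := by positivity
  simp only [eq_ratCast, Rat.cast_div, Rat.cast_one, Rat.cast_natCast]
  rw [Nat.factorial_succ]
  push_cast
  field_simp
  ring

theorem one_sub_rescale_exp_ne_zero : (1 : PowerSeries ℚ) - rescale (-1 : ℚ) (exp ℚ) ≠ 0 := by
  intro h
  have h1 : coeff 1 ((1 : PowerSeries ℚ) - rescale (-1 : ℚ) (exp ℚ)) = 1 := by
    rw [map_sub, coeff_one, coeff_rescale, coeff_exp]
    norm_num
  rw [h, map_zero] at h1
  norm_num at h1

theorem exp_sub_one_ne_zero : exp ℚ - 1 ≠ 0 := by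
  intro h
  have h1 : coeff 1 (exp ℚ - 1) = 1 := by
    rw [map_sub, coeff_one, coeff_exp]
    norm_num
  rw [h, map_zero] at h1
  norm_num at h1

theorem derivative_todd : d⁄dX ℚ toddSeries = d⁄dX ℚ G * toddSeries := by
  set e : PowerSeries ℚ := rescale (-1 : ℚ) (exp ℚ) with he
  have hee : exp ℚ * e = 1 := exp_mul_exp_neg_eq_one (A := ℚ)
  have hB : bernoulliPowerSeries ℚ * (exp ℚ - 1) = X := bernoulliPowerSeries_mul_exp_sub_one ℚ
  have hT : toddSeries * (1 - e) = X := todd_mul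
  have hTe : toddSeries * e = bernoulliPowerSeries ℚ := by
    apply mul_right_cancel₀ exp_sub_one_ne_zero
    linear_combination toddSeries * hee + hT - hB
  have hD := congrArg (d⁄dX ℚ) hT
  rw [Derivation.leibniz, derivative_X, map_sub, Derivation.map_one_eq_zero,
    derivative_rescale_exp, smul_eq_mul, smul_eq_mul] at hD
  apply mul_right_cancel₀ one_sub_rescale_exp_ne_zero
  linear_combination hD - hTe - X_mul_derivative_G - d⁄dX ℚ G * hT

end ToddAux

/-- Exponential form of the Todd power series:
`Σ_{n≥0} (-1)^n (B_n/n!) X^n = exp(-Σ_{k≥1} (B_k/(k·k!)) X^k)` in `ℚ⟦X⟧`; moreover the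
series `-Σ_{k≥1} (B_k/(k·k!)) X^k` has zero constant term, and the left-hand side is
indeed the series `P(X)` characterized by `P(X) · (1 - exp(-X)) = X`. -/
theorem toddSeries_eq_formalExp :
    toddSeries
      = formalExp (- PowerSeries.mk fun k =>
          if k = 0 then (0 : ℚ) else bernoulli k / ((k : ℚ) * (k.factorial : ℚ))) ∧
    PowerSeries.constantCoeff 
      (- PowerSeries.mk fun k =>
          if k = 0 then (0 : ℚ) else bernoulli k / ((k : ℚ) * (k.factorial : ℚ))) = 0 ∧
    toddSeries * (1 - PowerSeries.rescale (-1) (PowerSeries.exp ℚ)) = PowerSeries.X := by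
  refine ⟨?_, ToddAux.constantCoeff_G, ToddAux.todd_mul⟩
  exact ToddAux.ode_unique (d⁄dX ℚ ToddAux.G) _ _ ToddAux.derivative_todd
    (ToddAux.derivative_formalExp ToddAux.G ToddAux.constantCoeff_G)
    (by rw [ToddAux.constantCoeff_todd, ToddAux.constantCoeff_formalExp])
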